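/- Let K ⊆ ℝ^n be an extended second order cone with exactly m Lorentz-cone blocks, and let (K, L, c) be a relaxation-sequence feasibility problem. Then every relaxation sequence for (K, L, c) has length at most m + 1. -/

import Mathlib

open scoped RealInnerProductSpace Pointwise
open Classical

noncomputable section

/-- The Lorentz (second order) cone `SOC^{k+1} = {x = (x₀, x̄) : ‖x̄‖ ≤ x₀} ⊆ ℝ^{k+1}`. -/
def SOC (k : ℕ) : Set (EuclideanSpace ℝ (Fin (k + 1))) :=
  {x | Real.sqrt (∑ j : Fin k, x j.succ ^ 2) ≤ x 0}

/-- The reflection `x' = (x₀, -x̄)` of `x` with respect to the Lorentz cone. -/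
def reflect {k : ℕ} (x : EuclideanSpace ℝ (Fin (k + 1))) : EuclideanSpace ℝ (Fin (k + 1)) :=
  WithLp.toLp 2 fun j => if j = 0 then x 0 else - x j

/-- The closed half-space `H_d = {x : dᵀx ≥ 0}`. -/
def halfSpace {k : ℕ} (d : EuclideanSpace ℝ (Fin (k + 1))) :
    Set (EuclideanSpace ℝ (Fin (k + 1))) :=
  {x | 0 ≤ ⟪d, x⟫}

/-- The ray `ray_d = {α • d : α ≥ 0}`. -/
def ray {k : ℕ} (d : EuclideanSpace ℝ (Fin (k + 1))) :
    Set (EuclideanSpace ℝ (Fin (k + 1))) :=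
  {x | ∃ α : ℝ, 0 ≤ α ∧ x = α • d}

/-- A block of an extended second order cone: the trivial cone `{0}`, the whole space,
the Lorentz cone, a closed half-space `H_d` with `d ∈ SOC \ {0}`, or a ray `ray_d` with
`d ∈ SOC`. -/
def IsESOCBlock {k : ℕ} (B : Set (EuclideanSpace ℝ (Fin (k + 1)))) : Prop :=
  B = {0} ∨ B = Set.univ ∨ B = SOC k ∨
    (∃ d ∈ SOC k, d ≠ 0 ∧ B = halfSpace d) ∨ ∃ d ∈ SOC k, B = ray d

/-- The total space `ℝ^n = ℝ^{n_1} × ⋯ × ℝ^{n_m}` with the Euclidean (ℓ²) structure. -/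
abbrev TS {m : ℕ} (k : Fin m → ℕ) := PiLp 2 fun i => EuclideanSpace ℝ (Fin (k i + 1))

/-- The product cone `K = K^{n_1} × ⋯ × K^{n_m}` determined by the blocks `B i`. -/
def prodSet {m : ℕ} (k : Fin m → ℕ) (B : ∀ i, Set (EuclideanSpace ℝ (Fin (k i + 1)))) :
    Set (TS k) :=
  {x | ∀ i, x i ∈ B i}

/-- `B` describes an extended second order cone (blockwise). -/
def IsESOC {m : ℕ} (k : Fin m → ℕ) (B : ∀ i, Set (EuclideanSpace ℝ (Fin (k i + 1)))) : Prop :=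
  ∀ i, IsESOCBlock (B i)

/-- `H₁(a, K) = {i : K^{n_i} = SOC^{n_i}, a_{n_i} ∈ ri SOC^{n_i}}`. -/
def H1 {m : ℕ} (k : Fin m → ℕ) (B : ∀ i, Set (EuclideanSpace ℝ (Fin (k i + 1))))
    (a : TS k) : Set (Fin m) :=
  {i | B i = SOC (k i) ∧ a i ∈ intrinsicInterior ℝ (SOC (k i))}

/-- `H₂(a, K) = {i : K^{n_i} = SOC^{n_i}, a_{n_i} ∈ (rel bd SOC^{n_i}) \ {0}}`. -/
def H2 {m : ℕ} (k : Fin m → ℕ) (B : ∀ i, Set (EuclideanSpace ℝ (Fin (k i + 1))))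
    (a : TS k) : Set (Fin m) :=
  {i | B i = SOC (k i) ∧ a i ∈ intrinsicFrontier ℝ (SOC (k i)) ∧ a i ≠ 0}

/-- The relaxed cone `K̃` obtained from `K` and `a` (blockwise): block `i` becomes the whole
space if `i ∈ H₁(a, K)`, the half-space `H_{(a_{n_i})'}` if `i ∈ H₂(a, K)`, and is unchanged
otherwise. -/
def relaxedBlocks {m : ℕ} (k : Fin m → ℕ) (B : ∀ i, Set (EuclideanSpace ℝ (Fin (k i + 1))))
    (a : TS k) : ∀ i, Set (EuclideanSpace ℝ (Fin (k i + 1))) :=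
  fun i =>
    if i ∈ H1 k B a then Set.univ
    else if i ∈ H2 k B a then halfSpace (reflect (a i))
    else B i

/-- The affine set `L + c`. -/
def affineSet {V : Type*} [AddCommGroup V] [Module ℝ V] (L : Submodule ℝ V) (c : V) :
    Set V :=
  {x | x - c ∈ L}

/-- The distance between two sets. -/
def setDist {V : Type*} [NormedAddCommGroup V] (A B : Set V) : ℝ :=
  sInf (Set.image2 dist A B)

/-- `(K, L, c)` is strongly feasible: `(L + c) ∩ ri K ≠ ∅`. -/
def StronglyFeasible {V : Type*} [NormedAddCommGroup V] [Module ℝ V]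
    (K : Set V) (L : Submodule ℝ V) (c : V) : Prop :=
  (affineSet L c ∩ intrinsicInterior ℝ K).Nonempty

/-- `(K, L, c)` is weakly feasible: `K ∩ (L + c) ≠ ∅` but `(L + c) ∩ ri K = ∅`. -/
def WeaklyFeasible {V : Type*} [NormedAddCommGroup V] [Module ℝ V]
    (K : Set V) (L : Submodule ℝ V) (c : V) : Prop :=
  (K ∩ affineSet L c).Nonempty ∧ affineSet L c ∩ intrinsicInterior ℝ K = ∅

/-- `(K, L, c)` is weakly infeasible: `K ∩ (L + c) = ∅` but `dist(K, L + c) = 0`. -/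
def WeaklyInfeasible {V : Type*} [NormedAddCommGroup V] [Module ℝ V]
    (K : Set V) (L : Submodule ℝ V) (c : V) : Prop :=
  K ∩ affineSet L c = ∅ ∧ setDist K (affineSet L c) = 0

/-- `(K, L, c)` is strongly infeasible: `K ∩ (L + c) = ∅` and `dist(K, L + c) > 0`. -/
def StronglyInfeasible {V : Type*} [NormedAddCommGroup V] [Module ℝ V]
    (K : Set V) (L : Submodule ℝ V) (c : V) : Prop :=
  K ∩ affineSet L c = ∅ ∧ 0 < setDist K (affineSet L c)

/-- `(K, L, c)` is in weak status: weakly feasible or weakly infeasible. -/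
def WeakStatus {V : Type*} [NormedAddCommGroup V] [Module ℝ V]
    (K : Set V) (L : Submodule ℝ V) (c : V) : Prop :=
  WeaklyFeasible K L c ∨ WeaklyInfeasible K L c

/-- A relaxation sequence for `(K, L, c)`: a finite sequence of cones `K₁, …, K_γ` (given
blockwise; `blocks t` is `K_{t+1}` for `t < γ`, the point `c` plays no role in the data)
with `K₁ = K`, each `K_t` an extended second order cone, and for each step there exists
`d ∈ K_t ∩ L` such that `K_{t+1}` is the relaxed cone obtained from `K_t` and `d`, with
`K_t` strictly contained in `K_{t+1}`. -/
structure RelaxSeq {m : ℕ} (k : Fin m → ℕ) (B : ∀ i, Set (EuclideanSpace ℝ (Fin (k i + 1))))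
    (L : Submodule ℝ (TS k)) where
  /-- the length `γ` of the sequence -/
  gamma : ℕ
  gamma_pos : 0 < gamma
  /-- the cones of the sequence, given blockwise -/
  blocks : ℕ → ∀ i, Set (EuclideanSpace ℝ (Fin (k i + 1)))
  first : blocks 0 = B
  esoc : ∀ t, t < gamma → IsESOC k (blocks t)
  step : ∀ t, t + 1 < gamma → ∃ d : TS k, d ∈ prodSet k (blocks t) ∧ d ∈ L ∧
    blocks (t + 1) = relaxedBlocks k (blocks t) d ∧
    prodSet k (blocks t) ⊂ prodSet k (blocks (t + 1))

/-- The blocks of the cone `K_γ` of the last problem of a relaxation sequence. -/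
def RelaxSeq.lastBlocks {m : ℕ} {k : Fin m → ℕ}
    {B : ∀ i, Set (EuclideanSpace ℝ (Fin (k i + 1)))} {L : Submodule ℝ (TS k)}
    (S : RelaxSeq k B L) : ∀ i, Set (EuclideanSpace ℝ (Fin (k i + 1))) :=
  S.blocks (S.gamma - 1)

/-- A relaxation sequence is maximal if the last problem admits no non-trivial relaxation,
i.e. every `d ∈ K_γ ∩ L` has `H₁(d, K_γ) ∪ H₂(d, K_γ) = ∅`. -/
def RelaxSeq.Maximal {m : ℕ} {k : Fin m → ℕ}
    {B : ∀ i, Set (EuclideanSpace ℝ (Fin (k i + 1)))} {L : Submodule ℝ (TS k)}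
    (S : RelaxSeq k B L) : Prop :=
  ∀ d : TS k, d ∈ prodSet k S.lastBlocks → d ∈ L →
    H1 k S.lastBlocks d ∪ H2 k S.lastBlocks d = ∅

/-- **Bound on the length of relaxation sequences.**  Let `K` be an extended second order
cone with exactly `mL` Lorentz-cone blocks and let `(K, L, c)` be a feasibility problem.
Then every relaxation sequence for `(K, L, c)` has length at most `mL + 1`. -/
theorem relaxation_sequence_length_le {m : ℕ} (k : Fin m → ℕ)
    (B : ∀ i, Set (EuclideanSpace ℝ (Fin (k i + 1)))) (hB : IsESOC k B)
    (L : Submodule ℝ (TS k)) (c : TS k) (mL : ℕ)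
    (hmL : (Finset.univ.filter fun i => B i = SOC (k i)).card = mL)
    (S : RelaxSeq k B L) :
    S.gamma ≤ mL + 1 := by
  classical
  set N : ℕ → ℕ := fun t => (Finset.univ.filter fun i => S.blocks t i = SOC (k i)).card with hNdef
  have hstep : ∀ t, t + 1 < S.gamma → N (t + 1) < N t := by
    intro t ht
    obtain ⟨d, hdK, hdL, heq, hss⟩ := S.step t ht
    have hchange : ∀ i, S.blocks (t + 1) i ≠ S.blocks t i →
        S.blocks t i = SOC (k i) := by
      intro i hne
      have hrel : S.blocks (t + 1) i = relaxedBlocks k (S.blocks t) d i := by rw [heq]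
      rw [relaxedBlocks] at hrel
      by_cases h1 : i ∈ H1 k (S.blocks t) d
      · exact h1.1
      · by_cases h2 : i ∈ H2 k (S.blocks t) d
        · exact h2.1
        · simp only [h1, h2, if_false] at hrel
          exact absurd hrel hne
    have hsub : (Finset.univ.filter fun i => S.blocks (t + 1) i = SOC (k i)) ⊂
        (Finset.univ.filter fun i => S.blocks t i = SOC (k i)) := by
      constructor
      · intro i hi
        rw [Finset.mem_filter] at hi ⊢
        refine ⟨Finset.mem_univ i, ?_⟩
        by_cases hne : S.blocks (t + 1) i = S.blocks t i
        · rw [← hne]; exact hi.2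
        · exact hchange i hne
      · intro hcon
        obtain ⟨hsub', hns⟩ := hss
        apply hns
        -- derive contradiction: find witness i0
        exfalso
        rw [Set.not_subset] at hns
        obtain ⟨x, hxnew, hxold⟩ := hns
        have : ∃ i0, x i0 ∉ S.blocks t i0 := by
          by_contra h
          push_neg at h
          exact hxold h
        obtain ⟨i0, hi0⟩ := this
        have hne : S.blocks (t + 1) i0 ≠ S.blocks t i0 := by
          intro h
          exact hi0 (h ▸ hxnew i0)
        have hold : S.blocks t i0 = SOC (k i0) := hchange i0 hne
        have hnew : S.blocks (t + 1) i0 ≠ SOC (k i0) := fun h => hne (h.trans hold.symm)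
        have : i0 ∈ Finset.univ.filter fun i => S.blocks (t + 1) i = SOC (k i) := by
          apply hcon
          rw [Finset.mem_filter]
          exact ⟨Finset.mem_univ i0, hold⟩
        rw [Finset.mem_filter] at this
        exact hnew this.2
    exact Finset.card_lt_card hsub
  have hmono : ∀ t, t < S.gamma → N t + t ≤ N 0 := by
    intro t
    induction t with
    | zero => intro _; simp
    | succ s ih =>
      intro hs
      have hs' : s < S.gamma := Nat.lt_of_succ_lt hs
      have := hstep s hs
      omega
  have h0 : N 0 = mL := by
    rw [hNdef]
    simp only [S.first]
    exact hmL
  have hg : S.gamma - 1 < S.gamma := Nat.sub_lt S.gamma_pos one_pos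
  have := hmono (S.gamma - 1) hg
  omega

end
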